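/- Let n_k = 3^k and c_k = 3^{−2k} for all k ≥ 1. Then every Moran set K ∈ M([0,1], {n_k}, {c_k}) satisfies dim_qA K = 1/2. -/

import Mathlib

open Filter Topology Metric Set

/-- `coverNum X r R` : the smallest number of closed balls of radius `r` needed to cover
`X ∩ B` over all closed balls `B` of radius `R`. -/
noncomputable def coverNum (X : Type*) [MetricSpace X] (r R : ℝ) : ℕ :=
  sSup {n : ℕ | ∃ x : X, n = sInf {m : ℕ | ∃ s : Finset X,
    s.card = m ∧ Metric.closedBall x R ⊆ ⋃ y ∈ s, Metric.closedBall y r}}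

/-- `hFun X δ = inf {α ≥ 0 : ∃ b, c > 0, N_{r,R}(X) ≤ c (R/r)^α for all 0 < r < r^(1-δ) ≤ R < b}`. -/
noncomputable def hFun (X : Type*) [MetricSpace X] (δ : ℝ) : ℝ :=
  sInf {α : ℝ | 0 ≤ α ∧ ∃ b c : ℝ, 0 < b ∧ 0 < c ∧ ∀ r R : ℝ,
    0 < r → r < r ^ (1 - δ) → r ^ (1 - δ) ≤ R → R < b →
      (coverNum X r R : ℝ) ≤ c * (R / r) ^ α}

/-- The quasi-Assouad dimension `dim_qA X = lim_{δ → 0⁺} h_X(δ)`; since `h_X` is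
non-increasing in `δ`, this limit equals the supremum over `δ ∈ (0,1)`. -/
noncomputable def dimqA (X : Type*) [MetricSpace X] : ℝ :=
  sSup (hFun X '' Set.Ioo 0 1)

/-- A word `i₁ ⋯ i_k` (as a list, head = `i₁`) is admissible for the branching numbers `n`
if `1 ≤ i_t ≤ n t` for every `t`. -/
def MoranAdmissible (n : ℕ → ℕ) (w : List ℕ) : Prop :=
  ∀ t : ℕ, t < w.length → 1 ≤ w.getD t 0 ∧ w.getD t 0 ≤ n (t + 1)

/-- `F ∈ M(J, {n_k}, {c_k})` : `F` is a Moran set with initial closed interval `J`,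
branching numbers `n_k` and contraction ratios `c_k` (indices start at `1`). -/
def IsMoranSet (J : Set ℝ) (n : ℕ → ℕ) (c : ℕ → ℝ) (F : Set ℝ) : Prop :=
  ∃ A B : ℝ, A < B ∧ J = Set.Icc A B ∧
  ∃ a b : List ℕ → ℝ,
    a [] = A ∧ b [] = B ∧
    (∀ w : List ℕ, MoranAdmissible n w → ∀ j : ℕ, 1 ≤ j → j ≤ n (w.length + 1) →
      a w ≤ a (w ++ [j]) ∧ a (w ++ [j]) < b (w ++ [j]) ∧ b (w ++ [j]) ≤ b w ∧
      b (w ++ [j]) - a (w ++ [j]) = c (w.length + 1) * (b w - a w)) ∧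
    (∀ w : List ℕ, MoranAdmissible n w → ∀ j j' : ℕ, 1 ≤ j → j ≤ n (w.length + 1) →
      1 ≤ j' → j' ≤ n (w.length + 1) → j ≠ j' →
      interior (Set.Icc (a (w ++ [j])) (b (w ++ [j]))) ∩
        interior (Set.Icc (a (w ++ [j'])) (b (w ++ [j']))) = ∅) ∧
    F = ⋂ k : ℕ, ⋃ w ∈ {w : List ℕ | MoranAdmissible n w ∧ w.length = k},
      Set.Icc (a w) (b w)


namespace MoranAux
open scoped Classical


abbrev Adm (w : List ℕ) : Prop := MoranAdmissible (fun k => 3 ^ k) w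

lemma adm_nil : Adm [] := fun t ht => absurd ht (by simp)

lemma adm_concat_iff {w : List ℕ} {j : ℕ} :
    Adm (w ++ [j]) ↔ Adm w ∧ 1 ≤ j ∧ j ≤ 3 ^ (w.length + 1) := by
  constructor
  · intro h
    refine ⟨fun t ht => ?_, ?_, ?_⟩
    · have h2 := h t (by simp; omega)
      rwa [List.getD_append _ _ _ _ ht] at h2
    · have h2 := (h w.length (by simp)).1
      rwa [List.getD_append_right _ _ _ _ le_rfl, Nat.sub_self] at h2
    · have h2 := (h w.length (by simp)).2
      rwa [List.getD_append_right _ _ _ _ le_rfl, Nat.sub_self] at h2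
  · rintro ⟨hw, h1, h2⟩ t ht
    simp at ht
    rcases lt_or_ge t w.length with h | h
    · rw [List.getD_append _ _ _ _ h]; exact hw t h
    · have : t = w.length := by omega
      subst this
      rw [List.getD_append_right _ _ _ _ le_rfl, Nat.sub_self]
      exact ⟨h1, h2⟩

lemma adm_take {w : List ℕ} (hw : Adm w) (k : ℕ) : Adm (w.take k) := by
  intro t ht
  simp only [List.length_take, lt_min_iff] at ht
  have : (w.take k).getD t 0 = w.getD t 0 := by
    rw [List.getD_eq_getElem?_getD, List.getD_eq_getElem?_getD, List.getElem?_take,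
      if_pos ht.1]
  rw [this]
  exact hw t ht.2

lemma exists_concat {w : List ℕ} (hw : w ≠ []) : ∃ w' j, w = w' ++ [j] := by
  rcases List.eq_nil_or_concat w with h | ⟨w', j, h⟩
  · exact absurd h hw
  · exact ⟨w', j, by simpa using h⟩

lemma adm_concat_replicate_one {w : List ℕ} (hw : Adm w) (m : ℕ) :
    Adm (w ++ List.replicate m 1) := by
  induction m with
  | zero => simpa using hw
  | succ m ih =>
    rw [List.replicate_succ', ← List.append_assoc]
    exact adm_concat_iff.2 ⟨ih, le_rfl, Nat.one_le_pow _ _ (by norm_num)⟩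

noncomputable def L (m : ℕ) : ℝ := ((3:ℝ) ^ (m * (m + 1)))⁻¹

lemma L_pos (m : ℕ) : 0 < L m := by unfold L; positivity

lemma L_succ (m : ℕ) : L (m + 1) = ((3:ℝ) ^ (2 * (m + 1)))⁻¹ * L m := by
  rw [L, L, show (m+1) * (m+1+1) = 2*(m+1) + m*(m+1) by ring, pow_add, mul_inv]

lemma L_zero : L 0 = 1 := by simp [L]

lemma L_pred {l : ℕ} (hl : 1 ≤ l) : L (l - 1) = ((3:ℝ) ^ ((l - 1) * l))⁻¹ := by
  rw [L, show l - 1 + 1 = l by omega]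

lemma L_antitone {k l : ℕ} (h : k ≤ l) : L l ≤ L k := by
  apply inv_anti₀ (by positivity)
  exact pow_le_pow_right₀ (by norm_num) (Nat.mul_le_mul h (by omega))

/-- The structural hypotheses extracted from `IsMoranSet`. -/
structure Good (a b : List ℕ → ℝ) (K : Set ℝ) : Prop where
  ha0 : a [] = 0
  hb0 : b [] = 1
  hsub : ∀ w : List ℕ, Adm w → ∀ j : ℕ, 1 ≤ j → j ≤ 3 ^ (w.length + 1) →
      a w ≤ a (w ++ [j]) ∧ a (w ++ [j]) < b (w ++ [j]) ∧ b (w ++ [j]) ≤ b w ∧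
      b (w ++ [j]) - a (w ++ [j]) = ((3:ℝ) ^ (2 * (w.length + 1)))⁻¹ * (b w - a w)
  hdisj : ∀ w : List ℕ, Adm w → ∀ j j' : ℕ, 1 ≤ j → j ≤ 3 ^ (w.length + 1) →
      1 ≤ j' → j' ≤ 3 ^ (w.length + 1) → j ≠ j' →
      interior (Set.Icc (a (w ++ [j])) (b (w ++ [j]))) ∩
        interior (Set.Icc (a (w ++ [j'])) (b (w ++ [j']))) = ∅
  hK : K = ⋂ k : ℕ, ⋃ w ∈ {w : List ℕ | Adm w ∧ w.length = k},
      Set.Icc (a w) (b w)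

variable {a b : List ℕ → ℝ} {K : Set ℝ}

lemma len_eq (h : Good a b K) : ∀ {w : List ℕ}, Adm w → b w - a w = L w.length := by
  intro w
  induction w using List.reverseRecOn with
  | nil => intro _; simp [h.ha0, h.hb0, L_zero]
  | append_singleton w j ih =>
    intro hadm
    obtain ⟨hw, h1, h2⟩ := adm_concat_iff.1 hadm
    have hs := (h.hsub w hw j h1 h2).2.2.2
    rw [hs, ih hw]
    simp only [List.length_append, List.length_singleton]
    rw [L_succ]

lemma a_lt_b (h : Good a b K) {w : List ℕ} (hw : Adm w) : a w < b w := by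
  have := len_eq h hw
  have := L_pos w.length
  linarith

lemma prefix_le (h : Good a b K) : ∀ {w : List ℕ}, Adm w → ∀ k : ℕ,
    a (w.take k) ≤ a w ∧ b w ≤ b (w.take k) := by
  intro w
  induction w using List.reverseRecOn with
  | nil => intro _ k; simp
  | append_singleton w j ih =>
    intro hadm k
    obtain ⟨hw, h1, h2⟩ := adm_concat_iff.1 hadm
    have hs := h.hsub w hw j h1 h2
    rcases le_or_gt k w.length with hk | hk
    · rw [List.take_append_of_le_length hk]
      obtain ⟨ih1, ih2⟩ := ih hw k
      exact ⟨le_trans ih1 hs.1, le_trans hs.2.2.1 ih2⟩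
    · rw [List.take_of_length_le (by simp; omega)]
      exact ⟨le_rfl, le_rfl⟩

lemma Icc_subset_take (h : Good a b K) {w : List ℕ} (hw : Adm w) (k : ℕ) :
    Set.Icc (a w) (b w) ⊆ Set.Icc (a (w.take k)) (b (w.take k)) :=
  Set.Icc_subset_Icc (prefix_le h hw k).1 (prefix_le h hw k).2

lemma first_diff : ∀ (w w' : List ℕ), w.length = w'.length → w ≠ w' →
    ∃ u j j' s s', j ≠ j' ∧ w = u ++ j :: s ∧ w' = u ++ j' :: s' := by
  intro w
  induction w with
  | nil =>
    intro w' hl hne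
    cases w' with
    | nil => exact absurd rfl hne
    | cons x t => simp at hl
  | cons x t ih =>
    intro w' hl hne
    cases w' with
    | nil => simp at hl
    | cons x' t' =>
      by_cases hx : x = x'
      · subst hx
        have ht : t ≠ t' := fun hh => hne (by rw [hh])
        obtain ⟨u, j, j', s, s', h1, h2, h3⟩ := ih t' (by simpa using hl) ht
        exact ⟨x :: u, j, j', s, s', h1, by simp [h2], by simp [h3]⟩
      · exact ⟨[], x, x', t, t', hx, rfl, rfl⟩

lemma sep (h : Good a b K) {w w' : List ℕ} (hw : Adm w) (hw' : Adm w')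
    (hl : w.length = w'.length) (hne : w ≠ w') : L w.length ≤ |a w - a w'| := by
  by_contra hlt
  push_neg at hlt
  obtain ⟨u, j, j', s, s', hjj, hw1, hw2⟩ := first_diff w w' hl hne
  have hu : Adm u := by
    have : u = w.take u.length := by rw [hw1, List.take_append_of_le_length le_rfl]; simp
    rw [this]; exact adm_take hw _
  have hwj : w.take (u.length + 1) = u ++ [j] := by
    rw [hw1, show u ++ j :: s = (u ++ [j]) ++ s by simp,
      show u.length + 1 = (u ++ [j]).length by simp, List.take_left]
  have hwj' : w'.take (u.length + 1) = u ++ [j'] := by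
    rw [hw2, show u ++ j' :: s' = (u ++ [j']) ++ s' by simp,
      show u.length + 1 = (u ++ [j']).length by simp, List.take_left]
  have hjb : 1 ≤ j ∧ j ≤ 3 ^ (u.length + 1) := by
    have := hw u.length (by rw [hw1]; simp)
    rwa [hw1, List.getD_append_right _ _ _ _ le_rfl, Nat.sub_self] at this
  have hjb' : 1 ≤ j' ∧ j' ≤ 3 ^ (u.length + 1) := by
    have := hw' u.length (by rw [hw2]; simp)
    rwa [hw2, List.getD_append_right _ _ _ _ le_rfl, Nat.sub_self] at this
  have hd := h.hdisj u hu j j' hjb.1 hjb.2 hjb'.1 hjb'.2 hjj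
  -- the midpoint of the overlap
  set x := (max (a w) (a w') + min (b w) (b w')) / 2 with hx
  have hbw : b w = a w + L w.length := by have := len_eq h hw; linarith
  have hbw' : b w' = a w' + L w.length := by have := len_eq h hw'; rw [← hl] at this; linarith
  have habs := abs_lt.1 hlt
  have hmaxmin : max (a w) (a w') < min (b w) (b w') := by
    rcases le_total (a w) (a w') with hc | hc
    · rw [max_eq_right hc]
      apply lt_min
      · linarith
      · have := a_lt_b h hw'; linarith
    · rw [max_eq_left hc]
      apply lt_min
      · have := a_lt_b h hw; linarith
      · linarith
  have hxw : x ∈ interior (Set.Icc (a w) (b w)) := by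
    rw [interior_Icc]
    constructor
    · have h1 : a w ≤ max (a w) (a w') := le_max_left _ _
      linarith [hmaxmin]
    · have h1 : min (b w) (b w') ≤ b w := min_le_left _ _
      linarith [hmaxmin]
  have hxw' : x ∈ interior (Set.Icc (a w') (b w')) := by
    rw [interior_Icc]
    constructor
    · have h1 : a w' ≤ max (a w) (a w') := le_max_right _ _
      linarith [hmaxmin]
    · have h1 : min (b w) (b w') ≤ b w' := min_le_right _ _
      linarith [hmaxmin]
  have hsub1 : interior (Set.Icc (a w) (b w)) ⊆
      interior (Set.Icc (a (u ++ [j])) (b (u ++ [j]))) := by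
    rw [← hwj]; exact interior_mono (Icc_subset_take h hw _)
  have hsub2 : interior (Set.Icc (a w') (b w')) ⊆
      interior (Set.Icc (a (u ++ [j'])) (b (u ++ [j']))) := by
    rw [← hwj']; exact interior_mono (Icc_subset_take h hw' _)
  have : x ∈ (∅ : Set ℝ) := by
    rw [← hd]
    exact ⟨hsub1 hxw, hsub2 hxw'⟩
  exact this

lemma mem_level (h : Good a b K) {z : ℝ} (hz : z ∈ K) (k : ℕ) :
    ∃ w, Adm w ∧ w.length = k ∧ z ∈ Set.Icc (a w) (b w) := by
  rw [h.hK] at hz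
  have := Set.mem_iInter.1 hz k
  obtain ⟨w, hw, hmem⟩ := Set.mem_iUnion₂.1 this
  exact ⟨w, hw.1, hw.2, hmem⟩

lemma exists_pt (h : Good a b K) {w : List ℕ} (hw : Adm w) :
    ∃ x, x ∈ K ∧ x ∈ Set.Icc (a w) (b w) := by
  classical
  set u : ℕ → List ℕ := fun j => w ++ List.replicate j 1 with hu
  have hadm : ∀ j, Adm (u j) := fun j => adm_concat_replicate_one hw j
  have hlen : ∀ j, (u j).length = w.length + j := by intro j; simp [hu]
  have htake : ∀ i j, i ≤ j → (u j).take (w.length + i) = u i := by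
    intro i j hij
    have : u j = u i ++ List.replicate (j - i) 1 := by
      simp only [hu, List.append_assoc, ← List.replicate_add]
      congr 2
      omega
    rw [this, show w.length + i = (u i).length from (hlen i).symm, List.take_left]
  have hmono : ∀ i j, i ≤ j → a (u i) ≤ a (u j) ∧ b (u j) ≤ b (u i) := by
    intro i j hij
    have := prefix_le h (hadm j) (w.length + i)
    rwa [htake i j hij] at this
  set x := sSup (Set.range fun j => a (u j)) with hx
  have hbdd : ∀ i j : ℕ, a (u i) ≤ b (u j) := by
    intro i j
    rcases le_total i j with hc | hc
    · exact le_trans (hmono i j hc).1 (a_lt_b h (hadm j)).le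
    · exact le_trans (a_lt_b h (hadm i)).le (hmono j i hc).2
  have hxmem : ∀ j, x ∈ Set.Icc (a (u j)) (b (u j)) := by
    intro j
    constructor
    · exact le_csSup ⟨b (u 0), by rintro y ⟨i, rfl⟩; exact hbdd i 0⟩ ⟨j, rfl⟩
    · exact csSup_le (Set.range_nonempty _) (by rintro y ⟨i, rfl⟩; exact hbdd i j)
  have hu0 : u 0 = w := by simp [hu]
  refine ⟨x, ?_, by have := hxmem 0; rwa [hu0] at this⟩
  rw [h.hK]
  refine Set.mem_iInter.2 fun k => ?_
  rcases le_or_gt k w.length with hk | hk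
  · refine Set.mem_iUnion₂.2 ⟨w.take k, ⟨adm_take hw k, by simp [hk]⟩, ?_⟩
    have := hxmem 0
    rw [hu0] at this
    exact Icc_subset_take h hw k this
  · refine Set.mem_iUnion₂.2 ⟨u (k - w.length), ⟨hadm _, by rw [hlen]; omega⟩, hxmem _⟩

lemma K_subset_unit (h : Good a b K) : K ⊆ Set.Icc (0:ℝ) 1 := by
  intro z hz
  obtain ⟨w, hadm, hlen, hmem⟩ := mem_level h hz 0
  have : w = [] := List.eq_nil_of_length_eq_zero hlen
  subst this
  rwa [h.ha0, h.hb0] at hmem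

def Wfrom (u : List ℕ) : ℕ → Finset (List ℕ)
  | 0 => {u}
  | d + 1 => (Wfrom u d).biUnion
      (fun w => (Finset.Icc 1 (3 ^ (w.length + 1))).image (fun j => w ++ [j]))

lemma len_of_mem_Wfrom {u : List ℕ} : ∀ {d : ℕ} {w : List ℕ}, w ∈ Wfrom u d →
    w.length = u.length + d := by
  intro d
  induction d with
  | zero => intro w hw; simp [Wfrom] at hw; simp [hw]
  | succ d ih =>
    intro w hw
    simp only [Wfrom, Finset.mem_biUnion, Finset.mem_image] at hw
    obtain ⟨w', hw', j, _, rfl⟩ := hw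
    simp [ih hw']
    omega

lemma adm_of_mem_Wfrom {u : List ℕ} (hu : Adm u) : ∀ {d : ℕ} {w : List ℕ},
    w ∈ Wfrom u d → Adm w := by
  intro d
  induction d with
  | zero => intro w hw; simp [Wfrom] at hw; rwa [hw]
  | succ d ih =>
    intro w hw
    simp only [Wfrom, Finset.mem_biUnion, Finset.mem_image, Finset.mem_Icc] at hw
    obtain ⟨w', hw', j, hj, rfl⟩ := hw
    exact adm_concat_iff.2 ⟨ih hw', hj.1, hj.2⟩

lemma take_of_mem_Wfrom {u : List ℕ} : ∀ {d : ℕ} {w : List ℕ}, w ∈ Wfrom u d →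
    w.take u.length = u := by
  intro d
  induction d with
  | zero => intro w hw; simp [Wfrom] at hw; simp [hw]
  | succ d ih =>
    intro w hw
    simp only [Wfrom, Finset.mem_biUnion, Finset.mem_image] at hw
    obtain ⟨w', hw', j, _, rfl⟩ := hw
    have hl : u.length ≤ w'.length := by rw [len_of_mem_Wfrom hw']; omega
    rw [List.take_append_of_le_length hl, ih hw']

lemma mem_Wfrom_of_adm : ∀ {w : List ℕ}, Adm w → w ∈ Wfrom [] w.length := by
  intro w
  induction w using List.reverseRecOn with
  | nil => intro _; simp [Wfrom]
  | append_singleton w j ih =>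
    intro hadm
    obtain ⟨hw, h1, h2⟩ := adm_concat_iff.1 hadm
    have : (w ++ [j]).length = w.length + 1 := by simp
    rw [this]
    simp only [Wfrom, Finset.mem_biUnion]
    exact ⟨w, ih hw, Finset.mem_image.2 ⟨j, Finset.mem_Icc.2 ⟨h1, h2⟩, rfl⟩⟩

lemma prefix_mem_Wfrom {k : ℕ} : ∀ {d : ℕ} {w : List ℕ}, w ∈ Wfrom [] (k + d) →
    w ∈ Wfrom (w.take k) d := by
  intro d
  induction d with
  | zero =>
    intro w hw
    have := len_of_mem_Wfrom hw
    simp at this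
    simp [Wfrom, List.take_of_length_le (le_of_eq this)]
  | succ d ih =>
    intro w hw
    simp only [show k + (d+1) = (k+d) + 1 from rfl, Wfrom, Finset.mem_biUnion,
      Finset.mem_image] at hw
    obtain ⟨w', hw', j, hj, rfl⟩ := hw
    have hlw' : w'.length = k + d := by simpa using len_of_mem_Wfrom hw'
    have htk : (w' ++ [j]).take k = w'.take k :=
      List.take_append_of_le_length (by omega)
    rw [htk]
    simp only [Wfrom, Finset.mem_biUnion, Finset.mem_image]
    exact ⟨w', ih hw', j, hj, rfl⟩

lemma card_Wfrom (u : List ℕ) : ∀ d : ℕ,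
    (Wfrom u d).card = 3 ^ (∑ i ∈ Finset.Ioc u.length (u.length + d), i) := by
  intro d
  induction d with
  | zero => simp [Wfrom]
  | succ d ih =>
    have hdisj : ∀ w ∈ Wfrom u d, ∀ w' ∈ Wfrom u d, w ≠ w' →
        Disjoint ((Finset.Icc 1 (3 ^ (w.length + 1))).image (fun j => w ++ [j]))
          ((Finset.Icc 1 (3 ^ (w'.length + 1))).image (fun j => w' ++ [j])) := by
      intro w hw w' hw' hne
      rw [Finset.disjoint_left]
      intro x hx hx'
      obtain ⟨j, _, rfl⟩ := Finset.mem_image.1 hx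
      obtain ⟨j', _, heq⟩ := Finset.mem_image.1 hx'
      have hlen : w.length = w'.length := by
        rw [len_of_mem_Wfrom hw, len_of_mem_Wfrom hw']
      exact hne (List.append_inj' heq rfl).1.symm
    rw [Wfrom, Finset.card_biUnion hdisj]
    have hcard : ∀ w ∈ Wfrom u d,
        ((Finset.Icc 1 (3 ^ (w.length + 1))).image (fun j => w ++ [j])).card
          = 3 ^ (u.length + d + 1) := by
      intro w hw
      rw [Finset.card_image_of_injective _ (fun j j' hjj => by simpa using hjj),
        Nat.card_Icc, len_of_mem_Wfrom hw]
      simp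
    rw [Finset.sum_congr rfl hcard, Finset.sum_const, smul_eq_mul, ih,
      show u.length + (d + 1) = (u.length + d) + 1 from rfl,
      Finset.sum_Ioc_succ_top (by omega), pow_add]
    ring

/-- Packing: words of level `m` whose intervals meet `[p,q]` number at most
`(q-p)/L m + 2`. -/
lemma packing (h : Good a b K) (t : Finset (List ℕ)) (m : ℕ) (p q : ℝ) (hpq : p ≤ q)
    (hmem : ∀ w ∈ t, Adm w ∧ w.length = m)
    (hmeet : ∀ w ∈ t, a w ≤ q ∧ p ≤ b w) :
    t.card ≤ ⌊(q - p) / L m⌋₊ + 2 := by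
  classical
  have hLpos := L_pos m
  have key : ∀ w ∈ t, 0 ≤ (a w - p + L m) / L m ∧
      (a w - p + L m) / L m ≤ (q - p) / L m + 1 := by
    intro w hw
    obtain ⟨hadm, hlen⟩ := hmem w hw
    obtain ⟨haq, hpb⟩ := hmeet w hw
    have hblen : b w - a w = L m := by rw [len_eq h hadm, hlen]
    constructor
    · apply div_nonneg _ hLpos.le
      linarith
    · have h1 : a w - p + L m ≤ (q - p) + L m := by linarith
      calc (a w - p + L m) / L m ≤ ((q - p) + L m) / L m := by gcongr
        _ = (q - p) / L m + 1 := by rw [add_div, div_self hLpos.ne']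
  have hmaps : ∀ w ∈ t, ⌊(a w - p + L m) / L m⌋₊ ∈ Finset.range (⌊(q - p) / L m⌋₊ + 2) := by
    intro w hw
    rw [Finset.mem_range]
    have h1 := (key w hw).2
    have h2 : (⌊(a w - p + L m) / L m⌋₊ : ℕ) ≤ ⌊(q - p) / L m + 1⌋₊ :=
      Nat.floor_le_floor h1
    have h3 : ⌊(q - p) / L m + 1⌋₊ = ⌊(q - p) / L m⌋₊ + 1 := by
      rw [Nat.floor_add_one (div_nonneg (by linarith) hLpos.le)]
    omega
  have hinj : Set.InjOn (fun w => ⌊(a w - p + L m) / L m⌋₊) t := by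
    intro w hw w' hw' heq
    by_contra hne
    have hs := sep h (hmem w hw).1 (hmem w' hw').1
      (by rw [(hmem w hw).2, (hmem w' hw').2]) hne
    rw [(hmem w hw).2] at hs
    simp only at heq
    set x := (a w - p + L m) / L m with hxdef
    set x' := (a w' - p + L m) / L m with hxdef'
    have hx0 := (key w hw).1
    have hx0' := (key w' hw').1
    have h1 : (⌊x⌋₊ : ℝ) ≤ x := Nat.floor_le hx0
    have h2 : x < ⌊x⌋₊ + 1 := Nat.lt_floor_add_one x
    have h1' : (⌊x'⌋₊ : ℝ) ≤ x' := Nat.floor_le hx0'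
    have h2' : x' < ⌊x'⌋₊ + 1 := Nat.lt_floor_add_one x'
    rw [heq] at h1 h2
    have hlt : |x - x'| < 1 := by rw [abs_lt]; constructor <;> nlinarith [h1, h2, h1', h2']
    have hxx : x - x' = (a w - a w') / L m := by rw [hxdef, hxdef']; ring
    rw [hxx, abs_div, abs_of_pos hLpos, div_lt_one hLpos] at hlt
    linarith
  have hcard := Finset.card_le_card_of_injOn _ hmaps hinj
  simpa using hcard

noncomputable def ptK (h : Good a b K) (w : List ℕ) : ↥K :=
  if hw : Adm w then ⟨(exists_pt h hw).choose, (exists_pt h hw).choose_spec.1⟩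
  else ⟨(exists_pt h adm_nil).choose, (exists_pt h adm_nil).choose_spec.1⟩

lemma ptK_mem (h : Good a b K) {w : List ℕ} (hw : Adm w) :
    (ptK h w : ℝ) ∈ Set.Icc (a w) (b w) := by
  rw [ptK, dif_pos hw]
  exact (exists_pt h hw).choose_spec.2

lemma dist_le_of_mem_Icc (h : Good a b K) {w : List ℕ} (hw : Adm w) {z z' : ℝ}
    (hz : z ∈ Set.Icc (a w) (b w)) (hz' : z' ∈ Set.Icc (a w) (b w)) :
    dist z z' ≤ L w.length := by
  rw [Real.dist_eq, ← len_eq h hw, abs_le]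
  obtain ⟨h1, h2⟩ := hz
  obtain ⟨h3, h4⟩ := hz'
  constructor <;> linarith

/-- main covering construction -/
lemma exists_cover (h : Good a b K) (k l : ℕ) (hkl : k ≤ l) (r R : ℝ)
    (hr : L l ≤ r) (hR : 0 < R) (x : ↥K) :
    ∃ s : Finset ↥K, (Metric.closedBall x R ⊆ ⋃ y ∈ s, Metric.closedBall y r) ∧
      s.card ≤ 3 ^ (∑ i ∈ Finset.Ioc k l, i) * (⌊2 * R / L k⌋₊ + 2) := by
  classical
  set t := (Wfrom [] l).filter
    (fun w => a w ≤ (x:ℝ) + R ∧ (x:ℝ) - R ≤ b w) with ht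
  have htmem : ∀ w ∈ t, Adm w ∧ w.length = l := by
    intro w hw
    have h1 := (Finset.mem_filter.1 hw).1
    exact ⟨adm_of_mem_Wfrom adm_nil h1, by simpa using len_of_mem_Wfrom h1⟩
  refine ⟨t.image (ptK h), ?_, ?_⟩
  · intro z hz
    rw [Metric.mem_closedBall, Subtype.dist_eq, Real.dist_eq, abs_le] at hz
    obtain ⟨w, hadm, hlen, hmem⟩ := mem_level h z.2 l
    have hwt : w ∈ t := by
      rw [ht, Finset.mem_filter]
      refine ⟨by rw [← hlen]; exact mem_Wfrom_of_adm hadm, ?_, ?_⟩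
      · exact le_trans hmem.1 (by linarith [hz.2])
      · exact le_trans (by linarith [hz.1]) hmem.2
    refine Set.mem_iUnion₂.2 ⟨ptK h w, Finset.mem_image_of_mem _ hwt, ?_⟩
    rw [Metric.mem_closedBall, Subtype.dist_eq]
    calc dist (z:ℝ) (ptK h w : ℝ) ≤ L w.length :=
          dist_le_of_mem_Icc h hadm hmem (ptK_mem h hadm)
      _ ≤ r := by rw [hlen]; exact hr
  · calc (t.image (ptK h)).card ≤ t.card := Finset.card_image_le
      _ ≤ 3 ^ (∑ i ∈ Finset.Ioc k l, i) * (t.image (List.take k)).card := by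
          apply Finset.card_le_mul_card_image
          intro u hu
          obtain ⟨w₁, hw₁, rfl⟩ := Finset.mem_image.1 hu
          have hlen₁ : (w₁.take k).length = k := by
            rw [List.length_take, (htmem w₁ hw₁).2]; omega
          have hsubfib : t.filter (fun w => w.take k = w₁.take k) ⊆
              Wfrom (w₁.take k) (l - k) := by
            intro w hw
            obtain ⟨hwt', htk⟩ := Finset.mem_filter.1 hw
            have h1 : w ∈ Wfrom [] (k + (l - k)) := by
              rw [show k + (l - k) = l by omega]
              exact (Finset.mem_filter.1 hwt').1
            have := prefix_mem_Wfrom h1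
            rwa [htk] at this
          calc (t.filter (fun w => w.take k = w₁.take k)).card
              ≤ (Wfrom (w₁.take k) (l - k)).card := Finset.card_le_card hsubfib
            _ = 3 ^ (∑ i ∈ Finset.Ioc k l, i) := by
                rw [card_Wfrom, hlen₁, show k + (l - k) = l by omega]
      _ ≤ 3 ^ (∑ i ∈ Finset.Ioc k l, i) * (⌊2 * R / L k⌋₊ + 2) := by
          apply Nat.mul_le_mul_left
          have := packing h (t.image (List.take k)) k ((x:ℝ) - R) ((x:ℝ) + R)
            (by linarith) ?_ ?_
          · rwa [show (x:ℝ) + R - ((x:ℝ) - R) = 2 * R by ring] at this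
          · intro u hu
            obtain ⟨w₁, hw₁, rfl⟩ := Finset.mem_image.1 hu
            refine ⟨adm_take (htmem w₁ hw₁).1 k, ?_⟩
            rw [List.length_take, (htmem w₁ hw₁).2]; omega
          · intro u hu
            obtain ⟨w₁, hw₁, rfl⟩ := Finset.mem_image.1 hu
            have hpre := prefix_le h (htmem w₁ hw₁).1 k
            have hcond := (Finset.mem_filter.1 hw₁).2
            exact ⟨le_trans hpre.1 hcond.1, le_trans hcond.2 hpre.2⟩

/-- lower bound for coverings of a level-`k` cylinder ball -/
lemma cover_lower (h : Good a b K) (k l : ℕ) (hkl : k ≤ l) {w₀ : List ℕ}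
    (hw₀ : Adm w₀) (hlw₀ : w₀.length = k) (x : ↥K)
    (hx : (x:ℝ) ∈ Set.Icc (a w₀) (b w₀)) (s : Finset ↥K)
    (hcov : Metric.closedBall x (L k) ⊆ ⋃ y ∈ s, Metric.closedBall y (L l)) :
    3 ^ (∑ i ∈ Finset.Ioc k l, i) ≤ 4 * s.card := by
  classical
  set t := Wfrom w₀ (l - k) with htdef
  have htmem : ∀ w ∈ t, Adm w ∧ w.length = l := by
    intro w hw
    refine ⟨adm_of_mem_Wfrom hw₀ hw, ?_⟩
    rw [len_of_mem_Wfrom hw, hlw₀]; omega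
  have htake : ∀ w ∈ t, w.take k = w₀ := by
    intro w hw
    have := take_of_mem_Wfrom hw
    rwa [hlw₀] at this
  have hball : ∀ w ∈ t, ptK h w ∈ Metric.closedBall x (L k) := by
    intro w hw
    rw [Metric.mem_closedBall, Subtype.dist_eq]
    have h1 : (ptK h w : ℝ) ∈ Set.Icc (a w₀) (b w₀) := by
      have := Icc_subset_take h (htmem w hw).1 k (ptK_mem h (htmem w hw).1)
      rwa [htake w hw] at this
    have := dist_le_of_mem_Icc h hw₀ h1 hx
    rwa [hlw₀] at this
  set ψ : List ℕ → ↥K := fun w =>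
    if hw : ∃ y ∈ s, ptK h w ∈ Metric.closedBall y (L l) then hw.choose else x
    with hψ
  have hψspec : ∀ w ∈ t, ψ w ∈ s ∧ ptK h w ∈ Metric.closedBall (ψ w) (L l) := by
    intro w hw
    have hex : ∃ y ∈ s, ptK h w ∈ Metric.closedBall y (L l) := by
      have := hcov (hball w hw)
      simpa using this
    rw [hψ]
    simp only [dif_pos hex]
    exact ⟨hex.choose_spec.1, hex.choose_spec.2⟩
  have hcard : t.card ≤ 4 * (t.image ψ).card := by
    apply Finset.card_le_mul_card_image
    intro y hy
    have hpack := packing h (t.filter (fun w => ψ w = y)) l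
      ((y:ℝ) - L l) ((y:ℝ) + L l) (by linarith [L_pos l]) ?_ ?_
    · have h2 : (⌊((y:ℝ) + L l - ((y:ℝ) - L l)) / L l⌋₊ : ℕ) = 2 := by
        rw [show (y:ℝ) + L l - ((y:ℝ) - L l) = 2 * L l by ring,
          mul_div_assoc, div_self (L_pos l).ne', mul_one]
        norm_num
      rwa [h2] at hpack
    · intro w hw
      exact htmem w (Finset.mem_filter.1 hw).1
    · intro w hw
      obtain ⟨hwt, hψw⟩ := Finset.mem_filter.1 hw
      have := (hψspec w hwt).2
      rw [hψw, Metric.mem_closedBall, Subtype.dist_eq, Real.dist_eq, abs_le] at this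
      have hpt := ptK_mem h (htmem w hwt).1
      constructor
      · exact le_trans hpt.1 (by linarith [this.2])
      · exact le_trans (by linarith [this.1]) hpt.2
  have himg : t.image ψ ⊆ s := by
    intro y hy
    obtain ⟨w, hw, rfl⟩ := Finset.mem_image.1 hy
    exact (hψspec w hw).1
  calc 3 ^ (∑ i ∈ Finset.Ioc k l, i) = t.card := by
        rw [htdef, card_Wfrom, hlw₀, show k + (l - k) = l by omega]
    _ ≤ 4 * (t.image ψ).card := hcard
    _ ≤ 4 * s.card := Nat.mul_le_mul_left _ (Finset.card_le_card himg)

/-- crude global covering: any ball of `K` is covered by `⌊1/r⌋ + 1` balls of radius `r`. -/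
lemma crude_cover (h : Good a b K) (r R : ℝ) (hr : 0 < r) (x : ↥K) :
    ∃ s : Finset ↥K, (Metric.closedBall x R ⊆ ⋃ y ∈ s, Metric.closedBall y r) ∧
      s.card ≤ ⌊1 / r⌋₊ + 1 := by
  classical
  set P : ℕ → Prop := fun i => ∃ z : ↥K, (z:ℝ) ∈ Set.Icc (i * r) (i * r + r) with hP
  set q : ℕ → ↥K := fun i => if hi : P i then hi.choose else ptK h [] with hq
  refine ⟨((Finset.range (⌊1 / r⌋₊ + 1)).filter P).image q, ?_, ?_⟩
  · intro z _
    have hz01 : (z:ℝ) ∈ Set.Icc (0:ℝ) 1 := K_subset_unit h z.2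
    set i := ⌊(z:ℝ) / r⌋₊ with hi
    have hi1 : i ≤ ⌊1 / r⌋₊ := by
      apply Nat.floor_le_floor
      gcongr
      exact hz01.2
    have hzr : 0 ≤ (z:ℝ) / r := div_nonneg hz01.1 hr.le
    have hfl : (i : ℝ) ≤ (z:ℝ) / r := Nat.floor_le hzr
    have hfu : (z:ℝ) / r < i + 1 := Nat.lt_floor_add_one _
    have hmemi : (z:ℝ) ∈ Set.Icc ((i:ℝ) * r) ((i:ℝ) * r + r) := by
      constructor
      · calc (i:ℝ) * r ≤ ((z:ℝ) / r) * r := by gcongr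
          _ = z := by field_simp
      · have : (z:ℝ) = ((z:ℝ) / r) * r := by field_simp
        rw [this]
        have := mul_lt_mul_of_pos_right hfu hr
        linarith [this]
    have hPi : P i := ⟨z, hmemi⟩
    refine Set.mem_iUnion₂.2 ⟨q i, Finset.mem_image_of_mem _ ?_, ?_⟩
    · exact Finset.mem_filter.2 ⟨Finset.mem_range.2 (by omega), hPi⟩
    · have hspec : ((q i : ↥K) : ℝ) ∈ Set.Icc ((i:ℝ) * r) ((i:ℝ) * r + r) := by
        rw [hq]
        simp only [dif_pos hPi]
        exact hPi.choose_spec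
      rw [Metric.mem_closedBall, Subtype.dist_eq, Real.dist_eq, abs_le]
      constructor <;> [linarith [hmemi.1, hmemi.2, hspec.1, hspec.2];
        linarith [hmemi.1, hmemi.2, hspec.1, hspec.2]]
  · calc _ ≤ ((Finset.range (⌊1 / r⌋₊ + 1)).filter P).card := Finset.card_image_le
      _ ≤ (Finset.range (⌊1 / r⌋₊ + 1)).card := Finset.card_filter_le _ _
      _ = ⌊1 / r⌋₊ + 1 := Finset.card_range _

lemma coverNum_le (h : Good a b K) {M : ℕ} (r R : ℝ)
    (hcov : ∀ x : ↥K, ∃ s : Finset ↥K,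
      (Metric.closedBall x R ⊆ ⋃ y ∈ s, Metric.closedBall y r) ∧ s.card ≤ M) :
    coverNum ↥K r R ≤ M := by
  apply csSup_le'
  rintro n ⟨x, rfl⟩
  obtain ⟨s, hs, hcard⟩ := hcov x
  exact le_trans (Nat.sInf_le ⟨s, rfl, hs⟩) hcard

lemma coverNum_upper (h : Good a b K) (k l : ℕ) (hkl : k ≤ l) (r R : ℝ)
    (hr : L l ≤ r) (hR : 0 < R) :
    coverNum ↥K r R ≤ 3 ^ (∑ i ∈ Finset.Ioc k l, i) * (⌊2 * R / L k⌋₊ + 2) :=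
  coverNum_le h r R fun x => exists_cover h k l hkl r R hr hR x

lemma coverNum_lower (h : Good a b K) (k l : ℕ) (hkl : k ≤ l) {w₀ : List ℕ}
    (hw₀ : Adm w₀) (hlw₀ : w₀.length = k) :
    3 ^ (∑ i ∈ Finset.Ioc k l, i) ≤ 4 * coverNum ↥K (L l) (L k) := by
  classical
  obtain ⟨x₀v, hx₀K, hx₀I⟩ := exists_pt h hw₀
  set x₀ : ↥K := ⟨x₀v, hx₀K⟩ with hx₀
  set T := {m : ℕ | ∃ s : Finset ↥K,
    s.card = m ∧ Metric.closedBall x₀ (L k) ⊆ ⋃ y ∈ s, Metric.closedBall y (L l)} with hT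
  have hTne : T.Nonempty := by
    obtain ⟨s, hs, _⟩ := crude_cover h (L l) (L k) (L_pos l) x₀
    exact ⟨s.card, s, rfl, hs⟩
  obtain ⟨s, hcard, hcov⟩ := Nat.sInf_mem hTne
  have h1 : 3 ^ (∑ i ∈ Finset.Ioc k l, i) ≤ 4 * sInf T := by
    rw [← hcard]
    exact cover_lower h k l hkl hw₀ hlw₀ x₀ hx₀I s hcov
  have h2 : sInf T ≤ coverNum ↥K (L l) (L k) := by
    apply le_csSup
    · refine ⟨⌊1 / (L l)⌋₊ + 1, ?_⟩
      rintro n ⟨x, rfl⟩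
      obtain ⟨s', hs', hcard'⟩ := crude_cover h (L l) (L k) (L_pos l) x
      exact le_trans (Nat.sInf_le ⟨s', rfl, hs'⟩) hcard'
    · exact ⟨x₀, rfl⟩
  omega

lemma gauss {k l : ℕ} (hkl : k ≤ l) :
    k * (k + 1) + 2 * (∑ i ∈ Finset.Ioc k l, i) = l * (l + 1) := by
  induction l, hkl using Nat.le_induction with
  | base => simp
  | succ l hkl ih =>
    rw [Finset.sum_Ioc_succ_top hkl]
    ring_nf
    ring_nf at ih
    omega

lemma exists_L_le {ε : ℝ} (hε : 0 < ε) : ∃ m : ℕ, L m ≤ ε := by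
  obtain ⟨n, hn⟩ := pow_unbounded_of_one_lt (1 / ε) (by norm_num : (1:ℝ) < 3)
  refine ⟨n, ?_⟩
  have h1 : (3:ℝ) ^ n ≤ 3 ^ (n * (n + 1)) :=
    pow_le_pow_right₀ (by norm_num) (by nlinarith)
  have h2 : 1 / ε < 3 ^ (n * (n + 1)) := lt_of_lt_of_le hn h1
  rw [L]
  rw [inv_le_comm₀ (by positivity) hε]
  exact le_of_lt (by rwa [one_div] at h2)

lemma L_rpow (m : ℕ) : L m = (3:ℝ) ^ (-(m * (m + 1) : ℕ) : ℝ) := by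
  rw [Real.rpow_neg (by norm_num), Real.rpow_natCast, L]

lemma L_lt_one {m : ℕ} (hm : 1 ≤ m) : L m < 1 := by
  rw [L, inv_lt_one_iff₀]
  right
  apply one_lt_pow₀ (by norm_num)
  exact (by nlinarith : 0 < m * (m + 1)).ne'

lemma L_div_lt {k : ℕ} (hk : 1 ≤ k) {R : ℝ} (hR : 0 < R) (h2R : 2 * R < L (k - 1)) :
    2 * R / L k < (3:ℝ) ^ (2 * k) := by
  have hLs : L k = ((3:ℝ) ^ (2 * k))⁻¹ * L (k - 1) := by
    have := L_succ (k - 1)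
    rwa [show k - 1 + 1 = k by omega] at this
  rw [div_lt_iff₀ (L_pos k), hLs]
  calc 2 * R < L (k - 1) := h2R
    _ = (3:ℝ) ^ (2 * k) * (((3:ℝ) ^ (2 * k))⁻¹ * L (k - 1)) := by
        field_simp

lemma inv_swap {x y : ℝ} (hx : 0 < x) (hy : 0 < y) (h : x < y⁻¹) : y < x⁻¹ := by
  rw [← one_div, lt_div_iff₀ hx]
  have h1 : x * y < 1 := by
    have h2 := mul_lt_mul_of_pos_left h hy
    rw [mul_inv_cancel₀ hy.ne'] at h2
    linarith [h2]
  linarith [h1]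

set_option maxHeartbeats 2000000 in
lemma upper_mem (h : Good a b K) {δ α : ℝ} (hδ0 : 0 < δ) (hδ1 : δ < 1) (hα : 1/2 < α) :
    ∃ b' c' : ℝ, 0 < b' ∧ 0 < c' ∧ ∀ r R : ℝ,
      0 < r → r < r ^ (1 - δ) → r ^ (1 - δ) ≤ R → R < b' →
        (coverNum ↥K r R : ℝ) ≤ c' * (R / r) ^ α := by
  have hβ : 0 < (α - 1/2) * δ := mul_pos (by linarith) hδ0
  obtain ⟨l₀, hl₀⟩ := exists_nat_ge (5 / ((α - 1/2) * δ))
  have hl₀5 : 5 ≤ (α - 1/2) * δ * l₀ := by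
    rw [div_le_iff₀ hβ] at hl₀
    linarith
  refine ⟨1/2, (3:ℝ) ^ (3 * l₀ + 2), by norm_num, by positivity, ?_⟩
  intro r R hr0 hrr hrR hRb
  have hr1 : r < 1 := by
    by_contra hge
    push_neg at hge
    have h1 : r ^ (1 - δ) ≤ r ^ (1:ℝ) :=
      Real.rpow_le_rpow_of_exponent_le hge (by linarith)
    rw [Real.rpow_one] at h1
    linarith
  have hR0 : 0 < R := lt_of_lt_of_le (Real.rpow_pos_of_pos hr0 _) hrR
  have hrltR : r < R := lt_of_lt_of_le hrr hrR
  have hex_k : ∃ m, L m ≤ 2 * R := exists_L_le (by linarith)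
  have hex_l : ∃ m, L m ≤ r := exists_L_le hr0
  set k := Nat.find hex_k with hkdef
  set l := Nat.find hex_l with hldef
  have hk : L k ≤ 2 * R := Nat.find_spec hex_k
  have hl : L l ≤ r := Nat.find_spec hex_l
  have hk1 : 1 ≤ k := by
    rcases Nat.eq_zero_or_pos k with h0 | h; swap
    · exact h
    exfalso
    have h1 := hk
    rw [h0, L_zero] at h1
    linarith
  have hl1 : 1 ≤ l := by
    rcases Nat.eq_zero_or_pos l with h0 | h; swap
    · exact h
    exfalso
    have h1 := hl
    rw [h0, L_zero] at h1
    linarith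
  have hk' : 2 * R < L (k - 1) := by
    have := Nat.find_min hex_k (show k - 1 < k by omega)
    exact lt_of_not_ge this
  have hl' : r < L (l - 1) := by
    have := Nat.find_min hex_l (show l - 1 < l by omega)
    exact lt_of_not_ge this
  have hkl : k ≤ l := Nat.find_min' hex_k (le_trans hl (by linarith))
  set Sm := ∑ i ∈ Finset.Ioc k l, i with hSm
  have hN : (coverNum ↥K r R : ℝ) ≤ (3:ℝ) ^ (Sm + 2 * k + 1) := by
    have hcov := coverNum_upper h k l hkl r R hl hR0
    have hfl : (⌊2 * R / L k⌋₊ : ℝ) ≤ (3:ℝ) ^ (2 * k) := by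
      calc (⌊2 * R / L k⌋₊ : ℝ) ≤ 2 * R / L k :=
            Nat.floor_le (div_nonneg (by linarith) (L_pos k).le)
        _ ≤ (3:ℝ) ^ (2 * k) := (L_div_lt hk1 hR0 hk').le
    have hp1 : (1:ℝ) ≤ (3:ℝ) ^ (2 * k) := one_le_pow₀ (by norm_num)
    calc (coverNum ↥K r R : ℝ)
        ≤ ((3 ^ Sm * (⌊2 * R / L k⌋₊ + 2) : ℕ) : ℝ) := by exact_mod_cast hcov
      _ = (3:ℝ) ^ Sm * ((⌊2 * R / L k⌋₊ : ℝ) + 2) := by push_cast; ring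
      _ ≤ (3:ℝ) ^ Sm * ((3:ℝ) ^ (2 * k) + 2) := by gcongr
      _ ≤ (3:ℝ) ^ Sm * ((3:ℝ) ^ (2 * k) * 3) := by nlinarith [pow_pos (show (0:ℝ)<3 by norm_num) Sm]
      _ = (3:ℝ) ^ (Sm + 2 * k + 1) := by rw [pow_add, pow_add, pow_one]; ring
  -- lower bounds on R / r
  have hRr0 : 0 < R / r := div_pos hR0 hr0
  have hrinv : ((3:ℝ) ^ ((l - 1) * l)) ≤ r⁻¹ := by
    have h1 : r < ((3:ℝ) ^ ((l - 1) * l))⁻¹ := by rwa [L_pred hl1] at hl'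
    exact (inv_swap hr0 (by positivity) h1).le
  have hmain1 : r ^ (-δ) ≤ R / r := by
    have h1 : r ^ (1 - δ) / r ≤ R / r := by gcongr
    have h2 : r ^ (-δ) = r ^ (1 - δ) / r := by
      rw [show -δ = (1 - δ) - 1 by ring, Real.rpow_sub hr0, Real.rpow_one]
    rw [h2]
    exact h1
  have hRr_e1 : (3:ℝ) ^ ((((l - 1) * l : ℕ) : ℝ) * δ) ≤ R / r := by
    have h1 : ((3:ℝ) ^ ((l - 1) * l)) ^ δ ≤ (r⁻¹) ^ δ :=
      Real.rpow_le_rpow (by positivity) hrinv hδ0.le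
    have h2 : (r⁻¹) ^ δ = r ^ (-δ) := by
      rw [Real.inv_rpow hr0.le, ← Real.rpow_neg hr0.le]
    have h3 : ((3:ℝ) ^ ((l - 1) * l)) ^ δ = (3:ℝ) ^ ((((l - 1) * l : ℕ) : ℝ) * δ) := by
      rw [← Real.rpow_natCast 3 ((l - 1) * l), ← Real.rpow_mul (by norm_num)]
    rw [h3] at h1
    rw [h2] at h1
    exact le_trans h1 hmain1
  have hRr_e2 : (3:ℝ) ^ ((((l - 1) * l : ℕ) : ℝ) - ((k * (k + 1) : ℕ) : ℝ) - 1) ≤ R / r := by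
    have ha : L k / 2 ≤ R := by linarith
    have hb2 : ((3:ℝ) ^ ((l - 1) * l)) ≤ r⁻¹ := hrinv
    have hmul : (L k / 2) * (3:ℝ) ^ ((l - 1) * l) ≤ R * r⁻¹ :=
      mul_le_mul ha hb2 (by positivity) hR0.le
    have heq : (3:ℝ) ^ ((((l - 1) * l : ℕ) : ℝ) - ((k * (k + 1) : ℕ) : ℝ) - 1)
        = (L k / 3) * (3:ℝ) ^ ((l - 1) * l) := by
      rw [show (((l - 1) * l : ℕ) : ℝ) - ((k * (k + 1) : ℕ) : ℝ) - 1
        = (-(k * (k + 1) : ℕ) : ℝ) + (-1) + (((l - 1) * l : ℕ) : ℝ) by ring]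
      rw [Real.rpow_add (by norm_num), Real.rpow_add (by norm_num), ← L_rpow,
        Real.rpow_neg_one, Real.rpow_natCast]
      ring
    have h32 : L k / 3 ≤ L k / 2 := by
      have := L_pos k
      linarith
    rw [heq]
    calc L k / 3 * (3:ℝ) ^ ((l - 1) * l)
        ≤ L k / 2 * (3:ℝ) ^ ((l - 1) * l) :=
          mul_le_mul_of_nonneg_right h32 (by positivity)
      _ ≤ R * r⁻¹ := hmul
      _ = R / r := (div_eq_mul_inv R r).symm
  -- combine
  have hq : (3:ℝ) ^ (((((l - 1) * l : ℕ) : ℝ) - ((k * (k + 1) : ℕ) : ℝ) - 1) / 2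
      + ((((l - 1) * l : ℕ) : ℝ) * δ) * (α - 1/2)) ≤ (R / r) ^ α := by
    set e2 := (((l - 1) * l : ℕ) : ℝ) - ((k * (k + 1) : ℕ) : ℝ) - 1 with he2
    set e1 := (((l - 1) * l : ℕ) : ℝ) * δ with he1
    have hsplit : (R / r) ^ α = (R / r) ^ (1/2 : ℝ) * (R / r) ^ (α - 1/2) := by
      rw [← Real.rpow_add hRr0]
      norm_num
    have hf1 : (3:ℝ) ^ (e2 / 2) ≤ (R / r) ^ (1/2 : ℝ) := by
      have := Real.rpow_le_rpow (by positivity) hRr_e2 (by norm_num : (0:ℝ) ≤ 1/2)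
      rwa [← Real.rpow_mul (by norm_num : (0:ℝ) ≤ 3), mul_one_div] at this
    have hf2 : (3:ℝ) ^ (e1 * (α - 1/2)) ≤ (R / r) ^ (α - 1/2) := by
      have := Real.rpow_le_rpow (by positivity) hRr_e1 (by linarith : (0:ℝ) ≤ α - 1/2)
      rwa [← Real.rpow_mul (by norm_num : (0:ℝ) ≤ 3)] at this
    rw [hsplit, Real.rpow_add (by norm_num : (0:ℝ) < 3)]
    exact mul_le_mul hf1 hf2 (by positivity) (by positivity)
  refine le_trans hN ?_
  have hexp : ((Sm + 2 * k + 1 : ℕ) : ℝ) ≤ ((3 * l₀ + 2 : ℕ) : ℝ)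
      + (((((l - 1) * l : ℕ) : ℝ) - ((k * (k + 1) : ℕ) : ℝ) - 1) / 2
        + ((((l - 1) * l : ℕ) : ℝ) * δ) * (α - 1/2)) := by
    have hl1r : (1:ℝ) ≤ (l : ℝ) := by exact_mod_cast hl1
    have hklr : (k : ℝ) ≤ (l : ℝ) := by exact_mod_cast hkl
    have hk0r : (0:ℝ) ≤ (k : ℝ) := Nat.cast_nonneg k
    have hl₀0 : (0:ℝ) ≤ (l₀ : ℝ) := Nat.cast_nonneg l₀
    have hA : (((l - 1) * l : ℕ) : ℝ) = (l:ℝ) * l - (l:ℝ) := by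
      rw [Nat.cast_mul, Nat.cast_sub hl1]
      push_cast
      ring
    have hB : ((k * (k + 1) : ℕ) : ℝ) = (k:ℝ) * k + (k:ℝ) := by push_cast; ring
    have hS : ((Sm + 2 * k + 1 : ℕ) : ℝ) = (Sm:ℝ) + 2 * (k:ℝ) + 1 := by push_cast; ring
    have hC : ((3 * l₀ + 2 : ℕ) : ℝ) = 3 * (l₀:ℝ) + 2 := by push_cast; ring
    have hgaussr : (k:ℝ) * k + (k:ℝ) + 2 * (Sm:ℝ) = (l:ℝ) * l + (l:ℝ) := by
      have hgn : k * (k + 1) + 2 * Sm = l * (l + 1) := by rw [hSm]; exact gauss hkl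
      have hgc := congrArg (Nat.cast : ℕ → ℝ) hgn
      push_cast at hgc
      linear_combination hgc
    rw [hA, hB, hS, hC]
    rcases le_or_gt l l₀ with hcase | hcase
    · have hll₀ : (l : ℝ) ≤ (l₀ : ℝ) := by exact_mod_cast hcase
      have hXX : (0:ℝ) ≤ ((l:ℝ) - 1) * (l:ℝ) :=
        mul_nonneg (by linarith) (by linarith)
      have hT0 : (0:ℝ) ≤ (((l:ℝ) * l - (l:ℝ)) * δ) * (α - 1/2) := by
        apply mul_nonneg (mul_nonneg (by nlinarith [hXX]) hδ0.le) (by linarith)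
      linarith [hgaussr, hT0, hll₀, hklr]
    · have hlo : (l₀ : ℝ) ≤ (l : ℝ) - 1 := by
        have h1 : l₀ + 1 ≤ l := hcase
        have h2 := (Nat.cast_le (α := ℝ)).2 h1
        push_cast at h2
        linarith
      have h5' : 5 ≤ (α - 1/2) * δ * ((l:ℝ) - 1) := by
        calc (5:ℝ) ≤ (α - 1/2) * δ * l₀ := hl₀5
          _ ≤ (α - 1/2) * δ * ((l:ℝ) - 1) := by
              apply mul_le_mul_of_nonneg_left hlo hβ.le
      have h5l : 5 * (l:ℝ) ≤ ((α - 1/2) * δ * ((l:ℝ) - 1)) * l :=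
        mul_le_mul_of_nonneg_right h5' (by linarith)
      have hTT : ((α - 1/2) * δ * ((l:ℝ) - 1)) * l
          = (((l:ℝ) * l - (l:ℝ)) * δ) * (α - 1/2) := by ring
      rw [hTT] at h5l
      linarith [hgaussr, hklr, h5l, hl₀0, hl1r]
  have hfinal : (3:ℝ) ^ (Sm + 2 * k + 1) ≤ (3:ℝ) ^ (3 * l₀ + 2)
      * (3:ℝ) ^ (((((l - 1) * l : ℕ) : ℝ) - ((k * (k + 1) : ℕ) : ℝ) - 1) / 2
        + ((((l - 1) * l : ℕ) : ℝ) * δ) * (α - 1/2)) := by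
    rw [← Real.rpow_natCast 3 (Sm + 2 * k + 1), ← Real.rpow_natCast 3 (3 * l₀ + 2),
      ← Real.rpow_add (by norm_num : (0:ℝ) < 3)]
    exact (Real.rpow_le_rpow_left_iff (by norm_num : (1:ℝ) < 3)).2 hexp
  calc (3:ℝ) ^ (Sm + 2 * k + 1) ≤ _ := hfinal
    _ ≤ (3:ℝ) ^ (3 * l₀ + 2) * (R / r) ^ α := by
        apply mul_le_mul_of_nonneg_left hq (by positivity)

lemma lower_half (h : Good a b K) {δ : ℝ} (hδ0 : 0 < δ) (hδ1 : δ < 1) {α bb c : ℝ}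
    (hbb : 0 < bb) (hc : 0 < c)
    (hcov : ∀ r R : ℝ, 0 < r → r < r ^ (1 - δ) → r ^ (1 - δ) ≤ R → R < bb →
      (coverNum ↥K r R : ℝ) ≤ c * (R / r) ^ α) : 1/2 ≤ α := by
  by_contra hlt
  push_neg at hlt
  obtain ⟨k₀, hk₀⟩ := exists_L_le (half_pos hbb)
  have hz1 : (1:ℝ) < (3:ℝ) ^ ((1 - 2*α) : ℝ) :=
    Real.one_lt_rpow_iff_of_pos (by norm_num) |>.2 (Or.inl ⟨by norm_num, by linarith⟩)
  obtain ⟨l₁, hl₁⟩ := exists_nat_ge ((k₀*(k₀+1) : ℕ) / (1 - δ) : ℝ)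
  obtain ⟨n₂, hn₂⟩ := pow_unbounded_of_one_lt (4*c) hz1
  set l := max (max l₁ n₂) (k₀ + 1) with hldef
  have hll₁ : l₁ ≤ l := le_trans (le_max_left _ _) (le_max_left _ _)
  have hln₂ : n₂ ≤ l := le_trans (le_max_right _ _) (le_max_left _ _)
  have hlk₀ : k₀ + 1 ≤ l := le_max_right _ _
  have hkl : k₀ ≤ l := by omega
  have hl1 : 1 ≤ l := by omega
  set r := L l with hrdef
  set R := L k₀ with hRdef
  have hr0 : 0 < r := L_pos l
  have hr1 : r < 1 := L_lt_one hl1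
  have hcond2 : r < r ^ (1 - δ) := by
    have := Real.rpow_lt_rpow_of_exponent_gt hr0 hr1 (show 1 - δ < 1 by linarith)
    rwa [Real.rpow_one] at this
  have hcond3 : r ^ (1 - δ) ≤ R := by
    rw [hrdef, hRdef, L_rpow, L_rpow, ← Real.rpow_mul (by norm_num : (0:ℝ) ≤ 3)]
    apply (Real.rpow_le_rpow_left_iff (by norm_num : (1:ℝ) < 3)).2
    have h1 : ((k₀*(k₀+1) : ℕ) : ℝ) ≤ (1 - δ) * l₁ := by
      rw [div_le_iff₀ (by linarith : (0:ℝ) < 1 - δ)] at hl₁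
      linarith
    have h2 : (l₁ : ℝ) ≤ (l : ℝ) := by exact_mod_cast hll₁
    have h3 : ((l : ℝ)) ≤ ((l*(l+1) : ℕ) : ℝ) := by
      push_cast
      nlinarith [Nat.cast_nonneg (α := ℝ) l]
    have h4 : (1 - δ) * l₁ ≤ (1 - δ) * ((l*(l+1) : ℕ) : ℝ) := by
      apply mul_le_mul_of_nonneg_left _ (by linarith)
      linarith
    nlinarith [h1, h4]
  have hcond4 : R < bb := lt_of_le_of_lt hk₀ (by linarith)
  have hN := hcov r R hr0 hcond2 hcond3 hcond4
  set Sm := ∑ i ∈ Finset.Ioc k₀ l, i with hSm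
  have hlower : (3:ℝ) ^ Sm ≤ 4 * (coverNum ↥K r R : ℝ) := by
    have hw₀ : Adm (List.replicate k₀ 1) := by
      have := adm_concat_replicate_one adm_nil k₀
      rwa [List.nil_append] at this
    have := coverNum_lower h k₀ l hkl hw₀ List.length_replicate
    exact_mod_cast this
  -- R / r = 3 ^ (2 Sm)
  have hpow3 : (3:ℝ) ^ (l*(l+1)) = 3 ^ (k₀*(k₀+1)) * 3 ^ (2*Sm) := by
    rw [← pow_add, gauss hkl]
  have hRr : R / r = (3:ℝ) ^ (2*Sm) := by
    rw [hRdef, hrdef, L, L, div_eq_iff (by positivity : ((3:ℝ) ^ (l*(l+1)))⁻¹ ≠ 0)]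
    rw [hpow3]
    field_simp
  have hRr0 : (0:ℝ) < R / r := div_pos (L_pos k₀) hr0
  -- conclude 3 ^ (Sm (1-2α)) ≤ 4 c
  have hkey : (3:ℝ) ^ (((Sm:ℕ):ℝ) * (1 - 2*α)) ≤ 4 * c := by
    have h1 : (3:ℝ) ^ ((Sm:ℕ):ℝ) ≤ (4*c) * (3:ℝ) ^ (2*((Sm:ℕ):ℝ)*α) := by
      have h2 : (R / r) ^ α = (3:ℝ) ^ (2*((Sm:ℕ):ℝ)*α) := by
        rw [hRr, ← Real.rpow_natCast 3 (2*Sm), ← Real.rpow_mul (by norm_num : (0:ℝ) ≤ 3)]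
        congr 1
        push_cast
        ring
      rw [← h2, Real.rpow_natCast]
      calc (3:ℝ) ^ Sm ≤ 4 * (coverNum ↥K r R : ℝ) := hlower
        _ ≤ 4 * (c * (R/r) ^ α) := by linarith [hN]
        _ = (4*c) * (R/r) ^ α := by ring
    have h3 : (3:ℝ) ^ (((Sm:ℕ):ℝ) * (1 - 2*α))
        = (3:ℝ) ^ ((Sm:ℕ):ℝ) / (3:ℝ) ^ (2*((Sm:ℕ):ℝ)*α) := by
      rw [← Real.rpow_sub (by norm_num : (0:ℝ) < 3)]
      congr 1
      ring
    rw [h3, div_le_iff₀ (by positivity)]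
    exact h1
  -- but 3 ^ (Sm (1-2α)) ≥ z ^ l > 4c
  have hSml : l ≤ Sm := by
    rw [hSm]
    have hmem : l ∈ Finset.Ioc k₀ l := Finset.mem_Ioc.2 ⟨by omega, le_rfl⟩
    exact Finset.single_le_sum (f := fun i => i) (fun i _ => Nat.zero_le i) hmem
  have hzl : ((3:ℝ) ^ ((1 - 2*α) : ℝ)) ^ n₂ ≤ (3:ℝ) ^ (((Sm:ℕ):ℝ) * (1 - 2*α)) := by
    have he : ((3:ℝ) ^ ((1 - 2*α) : ℝ)) ^ n₂ = (3:ℝ) ^ ((n₂:ℝ) * (1 - 2*α)) := by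
      rw [← Real.rpow_natCast ((3:ℝ) ^ ((1 - 2*α) : ℝ)) n₂,
        ← Real.rpow_mul (by norm_num : (0:ℝ) ≤ 3)]
      congr 1
      ring
    rw [he]
    apply (Real.rpow_le_rpow_left_iff (by norm_num : (1:ℝ) < 3)).2
    have : (n₂ : ℝ) ≤ ((Sm:ℕ):ℝ) := by
      have : n₂ ≤ Sm := le_trans hln₂ hSml
      exact_mod_cast this
    nlinarith [this]
  linarith [hn₂, hzl, hkey]

lemma hFun_eq (h : Good a b K) {δ : ℝ} (hδ : δ ∈ Set.Ioo (0:ℝ) 1) :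
    hFun ↥K δ = 1/2 := by
  have hmem : ∀ α : ℝ, 1/2 < α → α ∈ {α : ℝ | 0 ≤ α ∧ ∃ b' c' : ℝ, 0 < b' ∧ 0 < c' ∧
      ∀ r R : ℝ, 0 < r → r < r ^ (1 - δ) → r ^ (1 - δ) ≤ R → R < b' →
        (coverNum ↥K r R : ℝ) ≤ c' * (R / r) ^ α} := by
    intro α hα
    exact ⟨by linarith, upper_mem h hδ.1 hδ.2 hα⟩
  have hne : Set.Nonempty {α : ℝ | 0 ≤ α ∧ ∃ b' c' : ℝ, 0 < b' ∧ 0 < c' ∧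
      ∀ r R : ℝ, 0 < r → r < r ^ (1 - δ) → r ^ (1 - δ) ≤ R → R < b' →
        (coverNum ↥K r R : ℝ) ≤ c' * (R / r) ^ α} := ⟨1, hmem 1 (by norm_num)⟩
  rw [hFun]
  apply le_antisymm
  · apply le_of_forall_pos_le_add
    intro ε hε
    calc sInf _ ≤ 1/2 + ε := csInf_le ⟨0, fun x hx => hx.1⟩ (hmem (1/2 + ε) (by linarith))
      _ = 1/2 + ε := rfl
  · apply le_csInf hne
    rintro α ⟨hα0, bb, c, hbb, hc, hcov⟩
    exact lower_half h hδ.1 hδ.2 hbb hc hcov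

lemma dimqA_eq (h : Good a b K) : dimqA ↥K = 1/2 := by
  rw [dimqA]
  have himg : hFun ↥K '' Set.Ioo 0 1 = {1/2} := by
    ext y
    simp only [Set.mem_image, Set.mem_singleton_iff]
    constructor
    · rintro ⟨δ, hδ, rfl⟩
      exact hFun_eq h hδ
    · rintro rfl
      exact ⟨1/2, ⟨by norm_num, by norm_num⟩, hFun_eq h ⟨by norm_num, by norm_num⟩⟩
  rw [himg, csSup_singleton]


end MoranAux


/-- For `n_k = 3^k` and `c_k = 3^(-2k)`, every Moran set `K ∈ M([0,1], {n_k}, {c_k})`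
satisfies `dim_qA K = 1/2`. -/

theorem dimqA_uniformCantor_example (K : Set ℝ)
    (hK : IsMoranSet (Set.Icc (0 : ℝ) 1) (fun k => 3 ^ k)
      (fun k => ((3 : ℝ) ^ (2 * k))⁻¹) K) :
    dimqA K = 1 / 2 := by
  obtain ⟨A, B, hAB, hJ, a, b, ha0, hb0, hsub, hdisj, hF⟩ := hK
  have hA0 : A = 0 := by
    have h0 : (0:ℝ) ∈ Set.Icc A B := by rw [← hJ]; exact ⟨le_rfl, by norm_num⟩
    have hA : A ∈ Set.Icc (0:ℝ) 1 := by rw [hJ]; exact ⟨le_rfl, hAB.le⟩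
    exact le_antisymm h0.1 hA.1
  have hB1 : B = 1 := by
    have h1 : (1:ℝ) ∈ Set.Icc A B := by rw [← hJ]; exact ⟨by norm_num, le_rfl⟩
    have hB : B ∈ Set.Icc (0:ℝ) 1 := by rw [hJ]; exact ⟨hAB.le, le_rfl⟩
    exact le_antisymm hB.2 h1.2
  subst hA0 hB1
  exact MoranAux.dimqA_eq ⟨ha0, hb0, hsub, hdisj, hF⟩
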